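/- Consider in ℝ³ the problem: minimize x₃ subject to g₁(x) := cos(x₁+x₂) − x₃ − 1 ≤ 0, g₂(x) := −cos(x₁+x₂) − x₃ + 1 ≤ 0, g₃(x) := −2x₃ ≤ 0, and let x* = (0,0,0). Then x* is a local minimizer at which MFCQ holds, Λ(x*) = {μ ∈ ℝ³₊ : μ₁ + μ₂ + 2μ₃ = 1}, S(x*) = {d ∈ ℝ³ : d₃ = 0}, and a multiplier μ ∈ Λ(x*) satisfies dᵀ∇²ₓₓL(x*,μ)d ≥ 0 for all d ∈ S(x*) if and only if μ₂ ≥ μ₁; in particular WSOC holds at x*. -/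

import Mathlib

open scoped BigOperators
open Matrix

attribute [local instance] Classical.propDecidable

noncomputable section

/-- The quadratic form `d ↦ dᵀ ∇²φ(x) d` of the Hessian of `φ` at `x`. -/
def hessQ {n : ℕ} (φ : (Fin n → ℝ) → ℝ) (x d : Fin n → ℝ) : ℝ :=
  iteratedFDeriv ℝ 2 φ x ![d, d]

/-- Feasibility for an inequality-constrained problem. -/
def FeasI {n p : ℕ} (g : Fin p → (Fin n → ℝ) → ℝ) (x : Fin n → ℝ) : Prop :=
  ∀ j, g j x ≤ 0

/-- The Lagrangian of an inequality-constrained problem. -/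
def LagrI {n p : ℕ} (f : (Fin n → ℝ) → ℝ) (g : Fin p → (Fin n → ℝ) → ℝ)
    (mu : Fin p → ℝ) (x : Fin n → ℝ) : ℝ :=
  f x + ∑ j, mu j * g j x

/-- `mu` is a Lagrange multiplier at `xs`, i.e. `mu ∈ Λ(xs)`. -/
def IsLagMultI {n p : ℕ} (f : (Fin n → ℝ) → ℝ) (g : Fin p → (Fin n → ℝ) → ℝ)
    (xs : Fin n → ℝ) (mu : Fin p → ℝ) : Prop :=
  (∀ j, 0 ≤ mu j) ∧ fderiv ℝ (LagrI f g mu) xs = 0 ∧ ∀ j, mu j * g j xs = 0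

/-- MFCQ for an inequality-constrained problem. -/
def MFCQI {n p : ℕ} (g : Fin p → (Fin n → ℝ) → ℝ) (xs : Fin n → ℝ) : Prop :=
  ∃ d : Fin n → ℝ, ∀ j, g j xs = 0 → fderiv ℝ (g j) xs d < 0

/-- Membership in the critical subspace `S(xs)`. -/
def critSubI {n p : ℕ} (g : Fin p → (Fin n → ℝ) → ℝ) (xs d : Fin n → ℝ) : Prop :=
  ∀ j, g j xs = 0 → fderiv ℝ (g j) xs d = 0

/-- Objective of the cosine example. -/
def f16 : (Fin 3 → ℝ) → ℝ := fun x => x 2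

/-- Constraints of the cosine example. -/
def g16 : Fin 3 → (Fin 3 → ℝ) → ℝ :=
  ![fun x => Real.cos (x 0 + x 1) - x 2 - 1,
    fun x => -Real.cos (x 0 + x 1) - x 2 + 1,
    fun x => -2 * x 2]

/- ### Auxiliary machinery -/

/-- The linear functional `x ↦ x 0 + x 1`. -/
def ell : (Fin 3 → ℝ) →L[ℝ] ℝ :=
  (ContinuousLinearMap.proj 0 : (Fin 3 → ℝ) →L[ℝ] ℝ) + (ContinuousLinearMap.proj 1 : (Fin 3 → ℝ) →L[ℝ] ℝ)

/-- The linear functional `x ↦ x 2`. -/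
def pr2 : (Fin 3 → ℝ) →L[ℝ] ℝ := ContinuousLinearMap.proj 2

/-- A generic function of the shape appearing in the example. -/
def Fa (a c b : ℝ) : (Fin 3 → ℝ) → ℝ := fun x => a * Real.cos (x 0 + x 1) + c * x 2 + b

lemma hasFDerivAt_Fa (a c b : ℝ) (x : Fin 3 → ℝ) :
    HasFDerivAt (Fa a c b) ((a • ((-Real.sin (x 0 + x 1)) • ell)) + c • pr2) x := by
  have hl : HasFDerivAt (fun x : Fin 3 → ℝ => x 0 + x 1) ell x := ell.hasFDerivAt
  have hcos : HasFDerivAt (fun x : Fin 3 → ℝ => Real.cos (x 0 + x 1))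
      ((-Real.sin (x 0 + x 1)) • ell) x :=
    by have := (Real.hasDerivAt_cos (x 0 + x 1)).comp_hasFDerivAt x hl; exact this
  have h2 : HasFDerivAt (fun x : Fin 3 → ℝ => x 2) pr2 x := pr2.hasFDerivAt
  exact ((hcos.const_mul a).add (h2.const_mul c)).add_const b

lemma fderiv_Fa (a c b : ℝ) (x : Fin 3 → ℝ) :
    fderiv ℝ (Fa a c b) x = (a • ((-Real.sin (x 0 + x 1)) • ell)) + c • pr2 :=
  (hasFDerivAt_Fa a c b x).fderiv

lemma fderiv_Fa_zero_apply (a c b : ℝ) (d : Fin 3 → ℝ) :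
    fderiv ℝ (Fa a c b) 0 d = c * d 2 := by
  rw [fderiv_Fa]
  simp [ell, pr2]

lemma fderiv_Fa_zero_eq_zero (a b : ℝ) :
    fderiv ℝ (Fa a 0 b) 0 = 0 := by
  rw [fderiv_Fa]
  simp [ell, pr2]

lemma fderiv2_Fa (a c b : ℝ) (d : Fin 3 → ℝ) :
    fderiv ℝ (fderiv ℝ (Fa a c b)) 0 d d = -a * (d 0 + d 1) ^ 2 := by
  have hfun : fderiv ℝ (Fa a c b) =
      fun x => ((a * -Real.sin (x 0 + x 1)) • ell) + c • pr2 := by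
    funext x; rw [fderiv_Fa]; rw [smul_smul]
  rw [hfun]
  have hl : HasFDerivAt (fun x : Fin 3 → ℝ => x 0 + x 1) ell (0 : Fin 3 → ℝ) :=
    ell.hasFDerivAt
  have hsin : HasFDerivAt (fun x : Fin 3 → ℝ => Real.sin (x 0 + x 1))
      ((Real.cos ((0 : Fin 3 → ℝ) 0 + (0 : Fin 3 → ℝ) 1)) • ell) (0 : Fin 3 → ℝ) :=
    (Real.hasDerivAt_sin _).comp_hasFDerivAt _ hl
  have hh : HasFDerivAt (fun x : Fin 3 → ℝ => a * -Real.sin (x 0 + x 1))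
      (a • -((Real.cos ((0:Fin 3 → ℝ) 0 + (0:Fin 3 → ℝ) 1)) • ell)) (0 : Fin 3 → ℝ) :=
    hsin.neg.const_mul a
  have hG : HasFDerivAt (fun x : Fin 3 → ℝ => ((a * -Real.sin (x 0 + x 1)) • ell) + c • pr2)
      ((a • -((Real.cos ((0:Fin 3 → ℝ) 0 + (0:Fin 3 → ℝ) 1)) • ell)).smulRight ell)
      (0 : Fin 3 → ℝ) :=
    (hh.smul_const ell).add_const (c • pr2)
  rw [hG.fderiv]
  simp [ell]
  ring

lemma hessQ_Fa (a c b : ℝ) (d : Fin 3 → ℝ) :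
    hessQ (Fa a c b) 0 d = -a * (d 0 + d 1) ^ 2 := by
  rw [hessQ, iteratedFDeriv_two_apply]
  simpa using fderiv2_Fa a c b d

lemma g16_zero_eq : g16 0 = Fa 1 (-1) (-1) := by
  funext x; simp [g16, Fa]; ring

lemma g16_one_eq : g16 1 = Fa (-1) (-1) 1 := by
  funext x; simp [g16, Fa]; ring

lemma g16_two_eq : g16 2 = Fa 0 (-2) 0 := by
  funext x; simp [g16, Fa]

lemma g16_at0 (j : Fin 3) : g16 j (0 : Fin 3 → ℝ) = 0 := by
  fin_cases j <;> simp [g16, Matrix.vecHead, Matrix.vecTail]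

lemma fderiv_g16_zero (j : Fin 3) (d : Fin 3 → ℝ) :
    fderiv ℝ (g16 j) 0 d = (![(-1 : ℝ), -1, -2] j) * d 2 := by
  have h0 : fderiv ℝ (g16 0) 0 d = -1 * d 2 := by
    rw [g16_zero_eq, fderiv_Fa_zero_apply]
  have h1 : fderiv ℝ (g16 1) 0 d = -1 * d 2 := by
    rw [g16_one_eq, fderiv_Fa_zero_apply]
  have h2 : fderiv ℝ (g16 2) 0 d = -2 * d 2 := by
    rw [g16_two_eq, fderiv_Fa_zero_apply]
  fin_cases j
  · simpa using h0
  · simpa using h1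
  · simpa using h2

lemma LagrI_eq (mu : Fin 3 → ℝ) :
    LagrI f16 g16 mu = Fa (mu 0 - mu 1) (1 - mu 0 - mu 1 - 2 * mu 2) (mu 1 - mu 0) := by
  funext x
  simp [LagrI, f16, g16, Fa, Fin.sum_univ_three]
  ring

/-- in the cosine example, the origin is a local minimizer where MFCQ holds,
`Λ(x*) = {μ ≥ 0 : μ₁ + μ₂ + 2μ₃ = 1}`, `S(x*) = {d : d₃ = 0}`, and a multiplier satisfies
the WSOC inequality on `S(x*)` iff `μ₂ ≥ μ₁`; in particular WSOC holds. -/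
theorem stmt16 :
    (FeasI g16 (0 : Fin 3 → ℝ) ∧ IsLocalMinOn f16 {x | FeasI g16 x} (0 : Fin 3 → ℝ)) ∧
    MFCQI g16 (0 : Fin 3 → ℝ) ∧
    (∀ mu : Fin 3 → ℝ, IsLagMultI f16 g16 (0 : Fin 3 → ℝ) mu ↔
      ((∀ j, 0 ≤ mu j) ∧ mu 0 + mu 1 + 2 * mu 2 = 1)) ∧
    ({d : Fin 3 → ℝ | critSubI g16 (0 : Fin 3 → ℝ) d} = {d : Fin 3 → ℝ | d 2 = 0}) ∧
    (∀ mu : Fin 3 → ℝ, IsLagMultI f16 g16 (0 : Fin 3 → ℝ) mu →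
      ((∀ d : Fin 3 → ℝ, critSubI g16 (0 : Fin 3 → ℝ) d →
        0 ≤ hessQ (LagrI f16 g16 mu) (0 : Fin 3 → ℝ) d) ↔ mu 0 ≤ mu 1)) ∧
    (∃ mu : Fin 3 → ℝ, IsLagMultI f16 g16 (0 : Fin 3 → ℝ) mu ∧
      ∀ d : Fin 3 → ℝ, critSubI g16 (0 : Fin 3 → ℝ) d →
        0 ≤ hessQ (LagrI f16 g16 mu) (0 : Fin 3 → ℝ) d) := by
  -- characterization of the critical subspace
  have hcrit : ∀ d : Fin 3 → ℝ, critSubI g16 (0 : Fin 3 → ℝ) d ↔ d 2 = 0 := by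
    intro d
    constructor
    · intro h
      have h2 := h 2 (g16_at0 2)
      rw [fderiv_g16_zero] at h2
      norm_num [Matrix.cons_val_two, Matrix.tail_cons, Matrix.head_cons] at h2
      exact h2
    · intro hd j _
      rw [fderiv_g16_zero, hd, mul_zero]
  -- hessian quadratic form of the Lagrangian
  have hhess : ∀ (mu : Fin 3 → ℝ) (d : Fin 3 → ℝ),
      hessQ (LagrI f16 g16 mu) 0 d = (mu 1 - mu 0) * (d 0 + d 1) ^ 2 := by
    intro mu d
    rw [LagrI_eq, hessQ_Fa]
    ring
  -- Lagrange multiplier characterization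
  have hlag : ∀ mu : Fin 3 → ℝ, IsLagMultI f16 g16 (0 : Fin 3 → ℝ) mu ↔
      ((∀ j, 0 ≤ mu j) ∧ mu 0 + mu 1 + 2 * mu 2 = 1) := by
    intro mu
    constructor
    · rintro ⟨hnn, hd, -⟩
      refine ⟨hnn, ?_⟩
      have h0 : fderiv ℝ (LagrI f16 g16 mu) 0 ![0, 0, 1] = 0 := by rw [hd]; rfl
      rw [LagrI_eq, fderiv_Fa_zero_apply] at h0
      norm_num [Matrix.cons_val_two, Matrix.tail_cons, Matrix.head_cons] at h0
      linarith
    · rintro ⟨hnn, hsum⟩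
      refine ⟨hnn, ?_, fun j => by rw [g16_at0, mul_zero]⟩
      rw [LagrI_eq]
      have hc : 1 - mu 0 - mu 1 - 2 * mu 2 = 0 := by linarith
      rw [hc]
      exact fderiv_Fa_zero_eq_zero _ _
  refine ⟨⟨?_, ?_⟩, ?_, hlag, ?_, ?_, ?_⟩
  · -- feasibility
    intro j
    rw [g16_at0]
  · -- local minimality (in fact global on the feasible set)
    apply IsMinOn.localize
    intro x hx
    have h1 : g16 1 x ≤ 0 := hx 1
    have hcos := Real.cos_le_one (x 0 + x 1)
    simp only [g16, Matrix.cons_val_one, Matrix.head_cons, Matrix.cons_val_zero] at h1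
    simp only [f16, Set.mem_setOf_eq, Pi.zero_apply]
    linarith
  · -- MFCQ
    refine ⟨![0, 0, 1], fun j _ => ?_⟩
    rw [fderiv_g16_zero]
    fin_cases j <;> norm_num [Matrix.cons_val_two, Matrix.tail_cons, Matrix.head_cons]
  · -- critical subspace
    ext d
    simpa using hcrit d
  · -- WSOC inequality iff mu 0 ≤ mu 1
    intro mu _
    constructor
    · intro h
      have hd : critSubI g16 (0 : Fin 3 → ℝ) ![1, 1, 0] := (hcrit _).mpr (by norm_num [Matrix.cons_val_two, Matrix.tail_cons, Matrix.head_cons])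
      have := h _ hd
      rw [hhess] at this
      norm_num at this
      linarith
    · intro hle d hd
      rw [hhess]
      have := sq_nonneg (d 0 + d 1)
      nlinarith
  · -- WSOC holds
    refine ⟨![0, 1, 0], (hlag _).mpr ⟨fun j => by fin_cases j <;> norm_num, by norm_num [Matrix.cons_val_two, Matrix.tail_cons, Matrix.head_cons]⟩,
      fun d _ => ?_⟩
    rw [hhess]
    norm_num
    positivity
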